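/- Let V be a finite-dimensional complex vector space carrying two Lie algebra structures g = (V, [·,·]) and n = (V, {·,·}), where n is 2-step nilpotent, i.e., {x, {y, z}} = 0 for all x, y, z ∈ V. If x·y is a post-Lie algebra structure on the pair (g, n), then the bilinear product x∘y := (1/2){x, y} + x·y is a pre-Lie algebra structure on g; that is, for all x, y, z ∈ V: x∘y − y∘x = [x, y] and [x, y]∘z = x∘(y∘z) − y∘(x∘z). -/
import Mathlib


/-- Let `g` and `n` be two Lie algebra structures on the same
finite-dimensional complex vector space (formalized as Lie algebras `G`, `N` with a
linear equivalence `e : G ≃ₗ[ℂ] N` identifying the underlying vector spaces), where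
`n` is `2`-step nilpotent, i.e. `{x, {y, z}} = 0` for all `x, y, z`. If `p` is a
post-Lie algebra structure on the pair `(g, n)`, then
`x ∘ y := (1/2) {x, y} + x · y` is a pre-Lie algebra structure on `g`: for all
`x, y, z` we have `x ∘ y - y ∘ x = [x, y]` and
`[x, y] ∘ z = x ∘ (y ∘ z) - y ∘ (x ∘ z)`. -/
theorem postLie_two_step_nilpotent_gives_preLie
    {G N : Type*} [LieRing G] [LieAlgebra ℂ G] [Module.Finite ℂ G]
    [LieRing N] [LieAlgebra ℂ N]
    (e : G ≃ₗ[ℂ] N)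
    (h2step : ∀ x y z : N, ⁅x, ⁅y, z⁆⁆ = 0)
    (p : G →ₗ[ℂ] G →ₗ[ℂ] G)
    (hax1 : ∀ x y : G, p x y - p y x = ⁅x, y⁆ - e.symm ⁅e x, e y⁆)
    (hax2 : ∀ x y z : G, p ⁅x, y⁆ z = p x (p y z) - p y (p x z))
    (hax3 : ∀ x y z : G,
      p x (e.symm ⁅e y, e z⁆) = e.symm ⁅e (p x y), e z⁆ + e.symm ⁅e y, e (p x z)⁆) :
    letI q : G → G → G := fun x y => (1 / 2 : ℂ) • e.symm ⁅e x, e y⁆ + p x y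
    (∀ x y : G, q x y - q y x = ⁅x, y⁆) ∧
    (∀ x y z : G, q ⁅x, y⁆ z = q x (q y z) - q y (q x z)) := by
  have hb1 : ∀ a b c : G, e.symm ⁅e a, e (e.symm ⁅e b, e c⁆)⁆ = 0 := by
    intro a b c; simp [h2step]
  have hb2 : ∀ a b c : G, e.symm ⁅e (e.symm ⁅e a, e b⁆), e c⁆ = 0 := by
    intro a b c
    rw [← lie_skew]
    simp [h2step]
  constructor
  · intro x y
    have hs : e.symm ⁅e y, e x⁆ = - e.symm ⁅e x, e y⁆ := by
      rw [← lie_skew]; exact map_neg _ _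
    simp only [hs]
    linear_combination (norm := module) hax1 x y
  · intro x y z
    have hkey : e.symm ⁅e (p x y), e z⁆ - e.symm ⁅e (p y x), e z⁆
        = e.symm ⁅e ⁅x, y⁆, e z⁆ := by
      have h := congrArg (fun w => e.symm ⁅e w, e z⁆) (hax1 x y)
      simpa [map_sub, sub_lie, hb2 x y z, h2step] using h
    simp only [map_add, map_smul, lie_add, lie_smul, smul_add, LinearMap.map_add,
      LinearMap.map_smul, hax3, hb1, hb2, smul_zero, add_zero, zero_add]
    linear_combination (norm := module) hax2 x y z - (1/2 : ℂ) • hkey
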